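/- Let A be a unital algebra over ℂ, M a unital A-bimodule, and m, n positive integers with m ≠ n. Let δ : A → M be an (m,n)-Jordan derivable mapping at zero with δ(1) = 0, and let P be an idempotent in A. Then for every A ∈ A, P·δ(A)·P = P·δ(PAP)·P. -/
import Mathlib


open MulOpposite

section AuxLemmas

variable {A M : Type*} [Ring A] [AddCommGroup M] [Module A M] [Module Aᵐᵒᵖ M]
  [SMulCommClass A Aᵐᵒᵖ M]

private lemma aux_swap (y X : A) (d : M) : op y • (X • d) = X • (op y • d) :=
  (smul_comm X (op y) d).symm

private lemma aux_ns1 (y : A) (k : ℕ) (d : M) : y • (k • d) = k • (y • d) :=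
  smul_comm y k d

private lemma aux_ns2 (y : Aᵐᵒᵖ) (k : ℕ) (d : M) : y • (k • d) = k • (y • d) :=
  smul_comm y k d

private lemma aux_opmul (b c : A) (d : M) : op b • (op c • d) = op (c * b) • d := by
  rw [smul_smul, ← op_mul]

private lemma aux_mulsmul (x y : A) (d : M) : x • (y • d) = (x * y) • d :=
  (mul_smul x y d).symm

private lemma aux_cancel {M : Type*} [AddCommGroup M] [Module ℂ M] {c : ℂ} {x : M}
    (hc : c ≠ 0) (h : c • x = 0) : x = 0 := by
  have h2 := congrArg (fun v => c⁻¹ • v) h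
  simpa [smul_smul, inv_mul_cancel₀ hc] using h2

end AuxLemmas

set_option maxHeartbeats 1000000 in
/-- `P·δ(A)·P = P·δ(PAP)·P` for every idempotent `P`. -/
theorem mn_jordan_derivable_at_zero_corner
    {A M : Type*} [Ring A] [Algebra ℂ A]
    [AddCommGroup M] [Module ℂ M] [Module A M] [Module Aᵐᵒᵖ M]
    [SMulCommClass A Aᵐᵒᵖ M]
    (m n : ℕ) (hm : 0 < m) (hn : 0 < n) (hmn : m ≠ n)
    (δ : A → M) (hadd : ∀ a b : A, δ (a + b) = δ a + δ b)
    (hδ1 : δ 1 = 0)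
    (hzero : ∀ X Y : A, X * Y = 0 → Y * X = 0 →
      (m + n) • δ (X * Y + Y * X) =
        (2 * m) • (op Y • δ X) + (2 * m) • (op X • δ Y)
          + (2 * n) • (X • δ Y) + (2 * n) • (Y • δ X))
    (P : A) (hP : P * P = P) (a : A) :
    P • (op P • δ a) = P • (op P • δ (P * a * P)) := by
  -- additive preliminaries
  have h0 : δ 0 = 0 := by
    have h := hadd 0 0
    rw [add_zero] at h
    linear_combination (norm := module) -h
  have hsub : ∀ x y : A, δ (x - y) = δ x - δ y := by
    intro x y
    have h := hadd (x - y) y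
    rw [sub_add_cancel] at h
    linear_combination (norm := module) -h
  set Q : A := 1 - P with hQdef
  have hPQ : P * Q = 0 := by rw [hQdef, mul_sub, mul_one, hP, sub_self]
  have hQP : Q * P = 0 := by rw [hQdef, sub_mul, one_mul, hP, sub_self]
  have hQQ : Q * Q = Q := by
    rw [hQdef, mul_sub, mul_one, sub_mul, one_mul, hP, sub_self, sub_zero]
  have hδQ : δ Q = -δ P := by
    have h1 : P + Q = 1 := by rw [hQdef]; abel
    have h2 := hadd P Q
    rw [h1, hδ1] at h2
    linear_combination (norm := module) -h2
  set t : A := P * a * Q with htdef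
  set w : A := Q * a * P with hwdef
  set q : A := Q * a * Q with hqdef
  -- atomic multiplication facts
  have htP : t * P = 0 := by rw [htdef, mul_assoc, hQP, mul_zero]
  have hPt : P * t = t := by
    rw [htdef, ← mul_assoc P (P * a) Q, ← mul_assoc P P a, hP]
  have htQ : t * Q = t := by rw [htdef, mul_assoc, hQQ]
  have hQt : Q * t = 0 := by
    rw [htdef, ← mul_assoc Q (P * a) Q, ← mul_assoc Q P a, hQP, zero_mul, zero_mul]
  have htt : t * t = 0 := by
    calc t * t = (P * a) * (Q * t) := by rw [htdef, mul_assoc]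
    _ = 0 := by rw [hQt, mul_zero]
  have hwP : w * P = w := by rw [hwdef, mul_assoc, hP]
  have hPw : P * w = 0 := by
    rw [hwdef, ← mul_assoc P (Q * a) P, ← mul_assoc P Q a, hPQ, zero_mul, zero_mul]
  have hwQ : w * Q = 0 := by rw [hwdef, mul_assoc, hPQ, mul_zero]
  have hQw : Q * w = w := by
    rw [hwdef, ← mul_assoc Q (Q * a) P, ← mul_assoc Q Q a, hQQ]
  have hww : w * w = 0 := by
    calc w * w = (Q * a) * (P * w) := by rw [hwdef, mul_assoc]
    _ = 0 := by rw [hPw, mul_zero]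
  have hqP : q * P = 0 := by rw [hqdef, mul_assoc, hQP, mul_zero]
  have hPq : P * q = 0 := by
    rw [hqdef, ← mul_assoc P (Q * a) Q, ← mul_assoc P Q a, hPQ, zero_mul, zero_mul]
  -- the pair (P, Q)
  have hE := hzero P Q hPQ hQP
  rw [hPQ, hQP, add_zero, h0, smul_zero, hδQ] at hE
  -- the pair (q, P)
  have hEq := hzero q P hqP hPq
  rw [hqP, hPq, add_zero, h0, smul_zero] at hEq
  have hEq2 := congrArg (fun v : M => P • (op P • v)) hEq
  simp only [smul_add, smul_sub, smul_neg, smul_zero, zero_smul, add_smul, sub_smul,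
    neg_smul, op_add, op_sub, op_neg, op_zero, aux_swap, aux_mulsmul, aux_opmul,
    aux_ns1, aux_ns2, hP, hPQ, hQP, hQQ, hPt, htP, htQ, hQt, hPw, hwP, hwQ, hQw,
    hqP, hPq, add_zero, zero_add, neg_zero] at hEq2
  have hyq : P • (op P • δ q) = 0 := by
    generalize hyqd : P • (op P • δ q) = yq
    simp only [hyqd] at hEq2
    apply aux_cancel (c := (2*m + 2*n : ℂ))
    · have : ((2*m + 2*n : ℕ) : ℂ) ≠ 0 := by
        exact_mod_cast (by omega : (2*m + 2*n : ℕ) ≠ 0)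
      push_cast at this; exact this
    · linear_combination (norm := module) -hEq2
  -- pairs for t
  have hA1 : (P + t) * (Q - t) = 0 := by
    simp only [add_mul, sub_mul, mul_add, mul_sub, hPQ, hQP, hP, hQQ, hPt, htP,
      htQ, hQt, htt]
    abel
  have hA2 : (Q - t) * (P + t) = 0 := by
    simp only [add_mul, sub_mul, mul_add, mul_sub, hPQ, hQP, hP, hQQ, hPt, htP,
      htQ, hQt, htt]
    abel
  have hB1 : (Q + t) * (P - t) = 0 := by
    simp only [add_mul, sub_mul, mul_add, mul_sub, hPQ, hQP, hP, hQQ, hPt, htP,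
      htQ, hQt, htt]
    abel
  have hB2 : (P - t) * (Q + t) = 0 := by
    simp only [add_mul, sub_mul, mul_add, mul_sub, hPQ, hQP, hP, hQQ, hPt, htP,
      htQ, hQt, htt]
    abel
  have hF := hzero (P + t) (Q - t) hA1 hA2
  rw [hA1, hA2, add_zero, h0, smul_zero, hadd P t, hsub Q t, hδQ] at hF
  have hG := hzero (Q + t) (P - t) hB1 hB2
  rw [hB1, hB2, add_zero, h0, smul_zero, hadd Q t, hsub P t, hδQ] at hG
  have hF2 := congrArg (fun v : M => P • (op P • v)) hF
  have hG2 := congrArg (fun v : M => P • (op P • v)) hG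
  have hE2t := congrArg (fun v : M => t • (op P • v)) hE
  simp only [smul_add, smul_sub, smul_neg, smul_zero, zero_smul, add_smul, sub_smul,
    neg_smul, op_add, op_sub, op_neg, op_zero, aux_swap, aux_mulsmul, aux_opmul,
    aux_ns1, aux_ns2, hP, hPQ, hQP, hQQ, hPt, htP, htQ, hQt, hPw, hwP, hwQ, hQw,
    hqP, hPq, add_zero, zero_add, neg_zero, neg_neg, sub_zero, zero_sub] at hF2
  simp only [smul_add, smul_sub, smul_neg, smul_zero, zero_smul, add_smul, sub_smul,
    neg_smul, op_add, op_sub, op_neg, op_zero, aux_swap, aux_mulsmul, aux_opmul,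
    aux_ns1, aux_ns2, hP, hPQ, hQP, hQQ, hPt, htP, htQ, hQt, hPw, hwP, hwQ, hQw,
    hqP, hPq, add_zero, zero_add, neg_zero, neg_neg, sub_zero, zero_sub] at hG2
  simp only [smul_add, smul_sub, smul_neg, smul_zero, zero_smul, add_smul, sub_smul,
    neg_smul, op_add, op_sub, op_neg, op_zero, aux_swap, aux_mulsmul, aux_opmul,
    aux_ns1, aux_ns2, hP, hPQ, hQP, hQQ, hPt, htP, htQ, hQt, hPw, hwP, hwQ, hQw,
    hqP, hPq, add_zero, zero_add, neg_zero, neg_neg, sub_zero, zero_sub] at hE2t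
  have hzt : t • (op P • δ P) = 0 := by
    generalize hz1d : t • (op P • δ P) = z1
    simp only [hz1d] at hE2t
    apply aux_cancel (c := (2*n : ℂ) - (2*m : ℂ))
    · have h1 : ((2*n : ℕ) : ℂ) ≠ ((2*m : ℕ) : ℂ) := by
        exact_mod_cast (by omega : (2*n : ℕ) ≠ 2*m)
      push_cast at h1
      exact sub_ne_zero.mpr h1
    · linear_combination (norm := module) -hE2t
  have hyt : P • (op P • δ t) = 0 := by
    generalize hy0d : P • (op P • δ t) = y0
    generalize hx0d : P • (op P • δ P) = x0
    generalize hz1d : t • (op P • δ P) = z1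
    generalize hz2d : t • (op P • δ t) = z2
    simp only [hx0d, hy0d, hz1d, hz2d] at hF2 hG2 hzt
    apply aux_cancel (c := (2*(2*m + 2*n) : ℂ))
    · have : ((2*(2*m + 2*n) : ℕ) : ℂ) ≠ 0 := by
        exact_mod_cast (by omega : (2*(2*m + 2*n) : ℕ) ≠ 0)
      push_cast at this; exact this
    · linear_combination (norm := module) hF2 - hG2 - (8*(n:ℂ)) • hzt
  -- pairs for w
  have hC1 : (P + w) * (Q - w) = 0 := by
    simp only [add_mul, sub_mul, mul_add, mul_sub, hPQ, hQP, hP, hQQ, hPw, hwP,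
      hwQ, hQw, hww]
    abel
  have hC2 : (Q - w) * (P + w) = 0 := by
    simp only [add_mul, sub_mul, mul_add, mul_sub, hPQ, hQP, hP, hQQ, hPw, hwP,
      hwQ, hQw, hww]
    abel
  have hD1 : (Q + w) * (P - w) = 0 := by
    simp only [add_mul, sub_mul, mul_add, mul_sub, hPQ, hQP, hP, hQQ, hPw, hwP,
      hwQ, hQw, hww]
    abel
  have hD2 : (P - w) * (Q + w) = 0 := by
    simp only [add_mul, sub_mul, mul_add, mul_sub, hPQ, hQP, hP, hQQ, hPw, hwP,
      hwQ, hQw, hww]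
    abel
  have hFw := hzero (P + w) (Q - w) hC1 hC2
  rw [hC1, hC2, add_zero, h0, smul_zero, hadd P w, hsub Q w, hδQ] at hFw
  have hGw := hzero (Q + w) (P - w) hD1 hD2
  rw [hD1, hD2, add_zero, h0, smul_zero, hadd Q w, hsub P w, hδQ] at hGw
  have hFw2 := congrArg (fun v : M => P • (op P • v)) hFw
  have hGw2 := congrArg (fun v : M => P • (op P • v)) hGw
  have hE2w := congrArg (fun v : M => P • (op w • v)) hE
  simp only [smul_add, smul_sub, smul_neg, smul_zero, zero_smul, add_smul, sub_smul,
    neg_smul, op_add, op_sub, op_neg, op_zero, aux_swap, aux_mulsmul, aux_opmul,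
    aux_ns1, aux_ns2, hP, hPQ, hQP, hQQ, hPt, htP, htQ, hQt, hPw, hwP, hwQ, hQw,
    hqP, hPq, add_zero, zero_add, neg_zero, neg_neg, sub_zero, zero_sub] at hFw2
  simp only [smul_add, smul_sub, smul_neg, smul_zero, zero_smul, add_smul, sub_smul,
    neg_smul, op_add, op_sub, op_neg, op_zero, aux_swap, aux_mulsmul, aux_opmul,
    aux_ns1, aux_ns2, hP, hPQ, hQP, hQQ, hPt, htP, htQ, hQt, hPw, hwP, hwQ, hQw,
    hqP, hPq, add_zero, zero_add, neg_zero, neg_neg, sub_zero, zero_sub] at hGw2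
  simp only [smul_add, smul_sub, smul_neg, smul_zero, zero_smul, add_smul, sub_smul,
    neg_smul, op_add, op_sub, op_neg, op_zero, aux_swap, aux_mulsmul, aux_opmul,
    aux_ns1, aux_ns2, hP, hPQ, hQP, hQQ, hPt, htP, htQ, hQt, hPw, hwP, hwQ, hQw,
    hqP, hPq, add_zero, zero_add, neg_zero, neg_neg, sub_zero, zero_sub] at hE2w
  have hzw : P • (op w • δ P) = 0 := by
    generalize hu1d : P • (op w • δ P) = u1
    simp only [hu1d] at hE2w
    apply aux_cancel (c := (2*m : ℂ) - (2*n : ℂ))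
    · have h1 : ((2*m : ℕ) : ℂ) ≠ ((2*n : ℕ) : ℂ) := by
        exact_mod_cast (by omega : (2*m : ℕ) ≠ 2*n)
      push_cast at h1
      exact sub_ne_zero.mpr h1
    · linear_combination (norm := module) -hE2w
  have hyw : P • (op P • δ w) = 0 := by
    generalize hv0d : P • (op P • δ w) = v0
    generalize hx0d : P • (op P • δ P) = x0
    generalize hu1d : P • (op w • δ P) = u1
    generalize hu2d : P • (op w • δ w) = u2
    simp only [hx0d, hv0d, hu1d, hu2d] at hFw2 hGw2 hzw
    apply aux_cancel (c := (2*(2*m + 2*n) : ℂ))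
    · have : ((2*(2*m + 2*n) : ℕ) : ℂ) ≠ 0 := by
        exact_mod_cast (by omega : (2*(2*m + 2*n) : ℕ) ≠ 0)
      push_cast at this; exact this
    · linear_combination (norm := module) hFw2 - hGw2 - (8*(m:ℂ)) • hzw
  -- assemble
  have haa : a = P * a * P + (t + (w + q)) := by
    rw [htdef, hwdef, hqdef, hQdef]
    noncomm_ring
  have hda := congrArg δ haa
  rw [hadd, hadd, hadd] at hda
  rw [hda]
  simp only [smul_add, hyt, hyw, hyq, add_zero, smul_zero]
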